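/- Assume s > 2r + d, p > r, and λ_k ≥ L_* |k|^p for |k| > K with L_* > 0. For u ∈ W_P(C,s), the Jacobian entries of F(u)_k = -λ_k u_k + N_k(u) satisfy: the i-th off-diagonal row sum ∑_{k ≠ i} |∂F_i/∂u_k| ≤ C̃(1 + |i|^r), and the diagonal entry satisfies ∂F_i/∂u_i ≤ -L_*|i|^p + D₁|i|^r. Consequently, the i-th row quantity a_{ii} + ∑_{k≠i}|a_{ik}| tends to -∞ as |i| → ∞, and there exists l ∈ ℝ bounding μ_∞(DF^n(u)) ≤ l uniformly over all Galerkin truncations n and all u ∈ W_P(C,s). -/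

import Mathlib

open Filter
open scoped BigOperators Topology

noncomputable def znorm {d : ℕ} (k : Fin d → ℤ) : ℝ := ‖(fun i => (k i : ℝ) : Fin d → ℝ)‖

/-- The modified norm on `ℤ^d`: the norm of `k` for `k ≠ 0`, and `|0| := 1`. -/
noncomputable def mnorm {d : ℕ} (k : Fin d → ℤ) : ℝ := if k = 0 then 1 else znorm k

lemma znorm_nonneg {d : ℕ} (k : Fin d → ℤ) : 0 ≤ znorm k := norm_nonneg _

lemma coord_le_znorm {d : ℕ} (k : Fin d → ℤ) (a : Fin d) : |(k a : ℝ)| ≤ znorm k := by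
  simpa [znorm] using norm_le_pi_norm (fun i => (k i : ℝ)) a

lemma one_le_znorm {d : ℕ} {k : Fin d → ℤ} (hk : k ≠ 0) : 1 ≤ znorm k := by
  obtain ⟨a, ha⟩ : ∃ a, k a ≠ 0 := by
    by_contra h; push_neg at h; exact hk (funext h)
  calc (1:ℝ) ≤ |(k a : ℝ)| := by
        rw [← Int.cast_abs]; exact_mod_cast Int.one_le_abs ha
    _ ≤ znorm k := coord_le_znorm k a

lemma znorm_zero {d : ℕ} : znorm (0 : Fin d → ℤ) = 0 := by
  have h0 : (fun a => (((0:Fin d → ℤ)) a : ℝ)) = (0 : Fin d → ℝ) := by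
    funext a; simp
  simp only [znorm, h0, norm_zero]

lemma mnorm_eq_max {d : ℕ} (k : Fin d → ℤ) : mnorm k = max 1 (znorm k) := by
  unfold mnorm
  split_ifs with h
  · subst h
    have : znorm (0 : Fin d → ℤ) = 0 := by
      have h0 : (fun a => (((0:Fin d → ℤ)) a : ℝ)) = (0 : Fin d → ℝ) := by
        funext a; simp
      simp only [znorm, h0, norm_zero]
    simp [this]
  · exact (max_eq_right (one_le_znorm h)).symm

lemma one_le_mnorm {d : ℕ} (k : Fin d → ℤ) : 1 ≤ mnorm k := by
  rw [mnorm_eq_max]; exact le_max_left _ _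

lemma mnorm_pos {d : ℕ} (k : Fin d → ℤ) : 0 < mnorm k := lt_of_lt_of_le one_pos (one_le_mnorm k)

lemma znorm_le_mnorm {d : ℕ} (k : Fin d → ℤ) : znorm k ≤ mnorm k := by
  rw [mnorm_eq_max]; exact le_max_right _ _

lemma coord_le_mnorm {d : ℕ} (k : Fin d → ℤ) (a : Fin d) : (max 1 |(k a : ℝ)|) ≤ mnorm k := by
  rw [mnorm_eq_max]
  exact max_le_max le_rfl (coord_le_znorm k a)

lemma mnorm_triangle {d : ℕ} (i k : Fin d → ℤ) : mnorm k ≤ mnorm i + mnorm (i - k) := by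
  rw [mnorm_eq_max]
  apply max_le
  · linarith [one_le_mnorm i, mnorm_pos (i - k), mnorm_pos i, one_le_mnorm (i-k)]
  · have : znorm k ≤ znorm i + znorm (i - k) := by
      have h : (fun a => ((k a : ℝ))) = (fun a => (i a : ℝ)) - (fun a => ((i - k) a : ℝ)) := by
        funext a; simp only [Pi.sub_apply]; push_cast; ring
      unfold znorm
      rw [h]
      exact norm_sub_le _ _
    calc znorm k ≤ znorm i + znorm (i - k) := this
      _ ≤ mnorm i + mnorm (i - k) := add_le_add (znorm_le_mnorm i) (znorm_le_mnorm (i-k))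

set_option maxHeartbeats 1000000 in
lemma summable_pi_prod {n : ℕ} {f : ℤ → ℝ} (hf0 : ∀ m, 0 ≤ f m) (hf : Summable f) :
    Summable (fun j : Fin n → ℤ => ∏ a, f (j a)) := by
  induction n with
  | zero =>
      have : (fun j : Fin 0 → ℤ => ∏ a, f (j a)) = fun _ => 1 := by
        funext j; simp
      rw [this]
      exact summable_of_finite_support (Set.toFinite _)
  | succ n ih =>
      have hprod : Summable (fun x : ℤ × (Fin n → ℤ) => f x.1 * ∏ a, f (x.2 a)) :=
        Summable.mul_of_nonneg (f := f) (g := fun j : Fin n → ℤ => ∏ a, f (j a))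
          hf ih hf0 (fun j => Finset.prod_nonneg fun a _ => hf0 _)
      set e := Fin.consEquiv (fun _ : Fin (n+1) => ℤ) with he
      rw [← e.summable_iff]
      apply hprod.congr
      intro x
      show f x.1 * ∏ a, f (x.2 a) = ∏ a, f (e x a)
      have : e x = Fin.cons (α := fun _ => ℤ) x.1 x.2 := rfl
      rw [this, Fin.prod_univ_succ]
      simp [Fin.cons_zero, Fin.cons_succ]

lemma summable_max_int {q : ℝ} (hq : 1 < q) :
    Summable (fun m : ℤ => (max 1 |(m : ℝ)|) ^ (-q)) := by
  have h1 : Summable (fun m : ℤ => |(m : ℝ)| ^ (-q)) := Real.summable_abs_int_rpow hq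
  have h2 : Summable (fun m : ℤ => if m = 0 then (1:ℝ) else 0) := by
    apply summable_of_ne_finset_zero (s := {0})
    intro m hm
    simp at hm
    simp [hm]
  apply (h1.add h2).congr
  intro m
  by_cases h : m = 0
  · subst h
    have h0 : ((0:ℝ)) ^ (-q) = 0 := Real.zero_rpow (by linarith)
    simp [h0]
  · have h1' : (1:ℝ) ≤ |(m:ℝ)| := by
      rw [← Int.cast_abs]; exact_mod_cast Int.one_le_abs h
    simp [h, max_eq_right h1']

set_option maxHeartbeats 800000 in
lemma summable_mnorm_rpow {d : ℕ} (hd : 1 ≤ d) {t : ℝ} (ht : (d : ℝ) < t) :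
    Summable (fun j : Fin d → ℤ => mnorm j ^ (-t)) := by
  have hd0 : (0:ℝ) < d := by exact_mod_cast hd
  have hq : 1 < t / d := (one_lt_div hd0).2 ht
  set g : ℤ → ℝ := fun m => (max 1 |(m : ℝ)|) ^ (-(t/d))
  have hg0 : ∀ m, 0 ≤ g m := fun m => Real.rpow_nonneg (le_trans zero_le_one (le_max_left _ _)) _
  have hgs : Summable g := summable_max_int hq
  have hP : Summable (fun j : Fin d → ℤ => ∏ a, g (j a)) := summable_pi_prod hg0 hgs
  apply Summable.of_nonneg_of_le (fun j => Real.rpow_nonneg (mnorm_pos j).le _) _ hP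
  intro j
  -- mnorm j ^ (-t) ≤ ∏ a, (max 1 |j a|) ^ (-(t/d))
  have hb : ∀ a : Fin d, (0:ℝ) < max 1 |(j a : ℝ)| := fun a => lt_of_lt_of_le one_pos (le_max_left _ _)
  have hprod_le : (∏ a, max 1 |(j a : ℝ)|) ≤ mnorm j ^ (d : ℕ) := by
    calc (∏ a, max 1 |(j a : ℝ)|) ≤ ∏ _a : Fin d, mnorm j :=
          Finset.prod_le_prod (fun a _ => (hb a).le) (fun a _ => coord_le_mnorm j a)
      _ = mnorm j ^ (d : ℕ) := by rw [Finset.prod_const]; simp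
  have hprod_pos : (0:ℝ) < ∏ a, max 1 |(j a : ℝ)| := Finset.prod_pos (fun a _ => hb a)
  calc mnorm j ^ (-t) = (mnorm j ^ (d:ℕ)) ^ (-(t/d)) := by
        rw [← Real.rpow_natCast (mnorm j) d, ← Real.rpow_mul (mnorm_pos j).le]
        congr 1
        field_simp
    _ ≤ (∏ a, max 1 |(j a : ℝ)|) ^ (-(t/d)) :=
        Real.rpow_le_rpow_of_nonpos hprod_pos hprod_le (neg_nonpos.mpr (div_nonneg (by linarith) hd0.le))
    _ = ∏ a, g (j a) := by
        rw [← Real.finset_prod_rpow _ _ (fun a _ => (hb a).le)]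

lemma finite_znorm_le {d : ℕ} (M : ℝ) : {i : Fin d → ℤ | znorm i ≤ M}.Finite := by
  have hsub : {i : Fin d → ℤ | znorm i ≤ M} ⊆
      Set.pi Set.univ (fun _ : Fin d => {x : ℤ | |(x:ℝ)| ≤ M}) := by
    intro i hi a _
    exact le_trans (coord_le_znorm i a) hi
  apply Set.Finite.subset _ hsub
  apply Set.Finite.pi
  intro a
  apply Set.Finite.subset (Set.finite_Icc (-⌈M⌉) ⌈M⌉)
  intro x hx
  simp only [Set.mem_setOf_eq] at hx
  have h1 : |x| ≤ ⌈M⌉ := by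
    have : ((|x| : ℤ) : ℝ) ≤ (⌈M⌉ : ℝ) := by
      rw [Int.cast_abs]; exact le_trans hx (Int.le_ceil M)
    exact_mod_cast this
  rw [Set.mem_Icc]
  exact abs_le.1 h1

lemma exists_cutoff (Ls E rr pp b : ℝ) (hLs : 0 < Ls) (hE : 0 ≤ E) (hrr : 0 ≤ rr)
    (hpr : rr < pp) :
    ∃ M : ℝ, 1 ≤ M ∧ ∀ x : ℝ, M ≤ x → E * x ^ rr - Ls * x ^ pp ≤ b := by
  refine ⟨max 1 (((E + |b|)/Ls) ^ (1/(pp - rr))), le_max_left _ _, ?_⟩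
  intro x hx
  have hx1 : (1:ℝ) ≤ x := le_trans (le_max_left _ _) hx
  have hx0 : (0:ℝ) < x := lt_of_lt_of_le one_pos hx1
  have hxr1 : (1:ℝ) ≤ x ^ rr := by
    have := Real.rpow_le_rpow_of_exponent_le hx1 hrr
    rwa [Real.rpow_zero] at this
  have hppr : (0:ℝ) < pp - rr := sub_pos.2 hpr
  have hbase : (0:ℝ) ≤ (E + |b|)/Ls := div_nonneg (by positivity) hLs.le
  have key : E + |b| ≤ Ls * x ^ (pp - rr) := by
    have h1 : ((E + |b|)/Ls) ^ (1/(pp-rr)) ≤ x := le_trans (le_max_right _ _) hx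
    have h2 := Real.rpow_le_rpow (Real.rpow_nonneg hbase _) h1 hppr.le
    rw [← Real.rpow_mul hbase, one_div, inv_mul_cancel₀ (ne_of_gt hppr), Real.rpow_one] at h2
    rw [div_le_iff₀ hLs] at h2
    linarith [h2]
  have hsplit : x ^ pp = x ^ rr * x ^ (pp - rr) := by
    rw [← Real.rpow_add hx0]; ring_nf
  have hxrr0 : (0:ℝ) ≤ x ^ rr := Real.rpow_nonneg hx0.le rr
  nlinarith [mul_le_mul_of_nonneg_left key hxrr0, abs_nonneg b, neg_abs_le b,
    mul_le_mul_of_nonneg_left hxr1 (abs_nonneg b)]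

lemma rpow_add_le {x y m rr : ℝ} (hx : 0 ≤ x) (hy : 0 ≤ y) (hm : 0 ≤ m) (h : m ≤ x + y)
    (hrr : 0 ≤ rr) : m ^ rr ≤ 2 ^ rr * (x ^ rr + y ^ rr) := by
  have h1 : m ≤ 2 * max x y := by
    rcases le_total x y with hxy | hxy
    · calc m ≤ x + y := h
        _ ≤ 2 * max x y := by rw [max_eq_right hxy]; linarith
    · calc m ≤ x + y := h
        _ ≤ 2 * max x y := by rw [max_eq_left hxy]; linarith
  calc m ^ rr ≤ (2 * max x y) ^ rr := Real.rpow_le_rpow hm h1 hrr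
    _ = 2 ^ rr * (max x y) ^ rr := Real.mul_rpow (by norm_num) (le_max_iff.2 (Or.inl hx))
    _ ≤ 2 ^ rr * (x ^ rr + y ^ rr) := by
        apply mul_le_mul_of_nonneg_left _ (Real.rpow_nonneg (by norm_num) _)
        rcases max_cases x y with ⟨hm', _⟩ | ⟨hm', _⟩ <;> rw [hm']
        · nlinarith [Real.rpow_nonneg hy rr]
        · nlinarith [Real.rpow_nonneg hx rr]

lemma offdiag_bound {d r : ℕ} (hd : 1 ≤ d) {s D₁ : ℝ} (hs : 2 * (r:ℝ) + d < s)
    (hD₁ : 0 < D₁) :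
    ∃ Ct : ℝ, 0 < Ct ∧ ∀ (i : Fin d → ℤ) (g : (Fin d → ℤ) → ℝ),
      (∀ k, 0 ≤ g k) → g i = 0 →
      (∀ k, k ≠ i → g k ≤ D₁ * mnorm k ^ (r:ℝ) / mnorm (i - k) ^ (s - r)) →
      Summable g ∧ tsum g ≤ Ct * (1 + mnorm i ^ (r:ℝ)) := by
  have hr0 : (0:ℝ) ≤ (r:ℝ) := Nat.cast_nonneg r
  have hd1 : (1:ℝ) ≤ (d:ℝ) := by exact_mod_cast hd
  have h1 : (d:ℝ) < s - r := by linarith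
  have h2 : (d:ℝ) < s - 2*r := by linarith
  have hA : Summable (fun j : Fin d → ℤ => mnorm j ^ (-(s - (r:ℝ)))) := summable_mnorm_rpow hd h1
  have hB : Summable (fun j : Fin d → ℤ => mnorm j ^ (-(s - 2*(r:ℝ)))) := summable_mnorm_rpow hd h2
  set A := ∑' j : Fin d → ℤ, mnorm j ^ (-(s - (r:ℝ))) with hAdef
  set B := ∑' j : Fin d → ℤ, mnorm j ^ (-(s - 2*(r:ℝ))) with hBdef
  have hA0 : 0 ≤ A := tsum_nonneg (fun j => Real.rpow_nonneg (mnorm_pos j).le _)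
  have hB0 : 0 ≤ B := tsum_nonneg (fun j => Real.rpow_nonneg (mnorm_pos j).le _)
  have h2r : (0:ℝ) < 2 ^ (r:ℝ) := Real.rpow_pos_of_pos (by norm_num) _
  have hCt0 : 0 < D₁ * 2 ^ (r:ℝ) * (A + B) + 1 := by
    have := mul_nonneg (mul_nonneg hD₁.le h2r.le) (add_nonneg hA0 hB0)
    linarith
  refine ⟨D₁ * 2 ^ (r:ℝ) * (A + B) + 1, hCt0, ?_⟩
  intro i g hg0 hgi hgle
  set H : (Fin d → ℤ) → ℝ := fun k => D₁ * 2 ^ (r:ℝ) *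
      (mnorm i ^ (r:ℝ) * mnorm (i - k) ^ (-(s - (r:ℝ))) + mnorm (i - k) ^ (-(s - 2*(r:ℝ))))
    with hHdef
  have hSA : Summable (fun k : Fin d → ℤ => mnorm (i - k) ^ (-(s - (r:ℝ)))) :=
    ((Equiv.subLeft i).summable_iff
      (f := fun j : Fin d → ℤ => mnorm j ^ (-(s - (r:ℝ))))).2 hA
  have hSB : Summable (fun k : Fin d → ℤ => mnorm (i - k) ^ (-(s - 2*(r:ℝ)))) :=
    ((Equiv.subLeft i).summable_iff
      (f := fun j : Fin d → ℤ => mnorm j ^ (-(s - 2*(r:ℝ))))).2 hB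
  have htA : ∑' k : Fin d → ℤ, mnorm (i - k) ^ (-(s - (r:ℝ))) = A := by
    have h := (Equiv.subLeft i).tsum_eq (f := fun j : Fin d → ℤ => mnorm j ^ (-(s - (r:ℝ))))
    simp only [Equiv.subLeft_apply] at h
    rw [hAdef]; exact h
  have htB : ∑' k : Fin d → ℤ, mnorm (i - k) ^ (-(s - 2*(r:ℝ))) = B := by
    have h := (Equiv.subLeft i).tsum_eq
      (f := fun j : Fin d → ℤ => mnorm j ^ (-(s - 2*(r:ℝ))))
    simp only [Equiv.subLeft_apply] at h
    rw [hBdef]; exact h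
  have hHs : Summable H := ((hSA.mul_left _).add hSB).mul_left _
  have hH0 : ∀ k, 0 ≤ H k := by
    intro k
    have e1 : (0:ℝ) ≤ mnorm i ^ (r:ℝ) * mnorm (i - k) ^ (-(s - (r:ℝ))) :=
      mul_nonneg (Real.rpow_nonneg (mnorm_pos i).le _) (Real.rpow_nonneg (mnorm_pos _).le _)
    have e2 : (0:ℝ) ≤ mnorm (i - k) ^ (-(s - 2*(r:ℝ))) := Real.rpow_nonneg (mnorm_pos _).le _
    have : (0:ℝ) ≤ D₁ * 2 ^ (r:ℝ) := by positivity
    simp only [hHdef]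
    nlinarith
  have hgH : ∀ k, g k ≤ H k := by
    intro k
    by_cases hk : k = i
    · rw [hk, hgi]; exact hH0 i
    · have hbound := hgle k hk
      have hy : (0:ℝ) < mnorm (i - k) := mnorm_pos _
      have hmr : mnorm k ^ (r:ℝ) ≤ 2 ^ (r:ℝ) * (mnorm i ^ (r:ℝ) + mnorm (i - k) ^ (r:ℝ)) :=
        rpow_add_le (mnorm_pos i).le hy.le (mnorm_pos k).le (mnorm_triangle i k) hr0
      have hyy : mnorm (i - k) ^ (r:ℝ) * mnorm (i - k) ^ (-(s - (r:ℝ)))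
          = mnorm (i - k) ^ (-(s - 2*(r:ℝ))) := by
        rw [← Real.rpow_add hy]; congr 1; ring
      calc g k ≤ D₁ * mnorm k ^ (r:ℝ) / mnorm (i - k) ^ (s - r) := hbound
        _ = D₁ * mnorm k ^ (r:ℝ) * mnorm (i - k) ^ (-(s - (r:ℝ))) := by
            rw [Real.rpow_neg hy.le, div_eq_mul_inv]
        _ ≤ D₁ * (2 ^ (r:ℝ) * (mnorm i ^ (r:ℝ) + mnorm (i - k) ^ (r:ℝ)))
              * mnorm (i - k) ^ (-(s - (r:ℝ))) := by
            apply mul_le_mul_of_nonneg_right (mul_le_mul_of_nonneg_left hmr hD₁.le)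
              (Real.rpow_nonneg hy.le _)
        _ = D₁ * 2 ^ (r:ℝ) * (mnorm i ^ (r:ℝ) * mnorm (i - k) ^ (-(s - (r:ℝ)))
              + mnorm (i - k) ^ (r:ℝ) * mnorm (i - k) ^ (-(s - (r:ℝ)))) := by ring
        _ = H k := by rw [hyy]
  have hgs : Summable g := Summable.of_nonneg_of_le hg0 hgH hHs
  refine ⟨hgs, ?_⟩
  have htH : ∑' k, H k = D₁ * 2 ^ (r:ℝ) * (mnorm i ^ (r:ℝ) * A + B) := by
    simp only [hHdef]
    rw [tsum_mul_left, Summable.tsum_add (hSA.mul_left _) hSB, tsum_mul_left, htA, htB]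
  have hle := Summable.tsum_le_tsum hgH hgs hHs
  rw [htH] at hle
  have hx1 : (1:ℝ) ≤ mnorm i ^ (r:ℝ) := Real.one_le_rpow (one_le_mnorm i) hr0
  nlinarith [mul_nonneg (mul_nonneg hD₁.le h2r.le) hA0,
    mul_nonneg (mul_nonneg hD₁.le h2r.le) hB0,
    mul_nonneg (mul_nonneg (mul_nonneg hD₁.le h2r.le) hB0) (by linarith : (0:ℝ) ≤ mnorm i ^ (r:ℝ))]

/-- Row estimates for the Jacobian of `F(u)_k = -λ_k u_k + N_k(u)` on `W_P(C,s)` with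
`s > 2r + d`, `p > r`, `λ_i ≥ L_* |i|^p` for `|i| > K`.  If a matrix `a` satisfies the
derivative bounds `|a i k| ≤ D₁|k|^r/|i-k|^{s-r}` (`k ≠ i`) and
`a i i ≤ -λ_i + D₁|i|^r`, then: the off-diagonal row sums are bounded by
`C̃(1 + |i|^r)`; the row quantity `a_ii + ∑_{k≠i}|a_ik|` tends to `-∞` as `|i| → ∞`;
and there is `l ∈ ℝ` bounding every row quantity, hence bounding `μ_∞` of every
Galerkin truncation `DF^n(u)`, uniformly in `n` and `u ∈ W_P(C,s)`. -/
theorem stmt17 {d r : ℕ} (hd : 1 ≤ d) (s p K Ls D₁ : ℝ)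
    (hs : 2 * (r : ℝ) + d < s) (hp : (r : ℝ) < p) (hLs : 0 < Ls) (hD₁ : 0 < D₁)
    (lam : (Fin d → ℤ) → ℝ)
    (hlam : ∀ i : Fin d → ℤ, K < znorm i → Ls * znorm i ^ p ≤ lam i) :
    ∃ Ct : ℝ, 0 < Ct ∧ ∃ l : ℝ,
      ∀ a : (Fin d → ℤ) → (Fin d → ℤ) → ℝ,
        (∀ i k : Fin d → ℤ, k ≠ i →
          |a i k| ≤ D₁ * mnorm k ^ (r : ℝ) / mnorm (i - k) ^ (s - r)) →
        (∀ i : Fin d → ℤ, a i i ≤ -lam i + D₁ * mnorm i ^ (r : ℝ)) →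
        (∀ i : Fin d → ℤ,
          Summable (fun k : Fin d → ℤ => if k = i then 0 else |a i k|) ∧
          (∑' k : Fin d → ℤ, if k = i then 0 else |a i k|) ≤
            Ct * (1 + mnorm i ^ (r : ℝ))) ∧
        Tendsto (fun i : Fin d → ℤ =>
          a i i + ∑' k : Fin d → ℤ, if k = i then 0 else |a i k|) cofinite atBot ∧
        (∀ i : Fin d → ℤ,
          a i i + (∑' k : Fin d → ℤ, if k = i then 0 else |a i k|) ≤ l) := by
  have hr0 : (0:ℝ) ≤ (r:ℝ) := Nat.cast_nonneg r
  have hd1 : (1:ℝ) ≤ (d:ℝ) := by exact_mod_cast hd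
  obtain ⟨Ct, hCt, hrow⟩ := offdiag_bound hd hs hD₁
  obtain ⟨M₀, hM₀1, hM₀⟩ := exists_cutoff Ls (D₁ + 2*Ct) (r:ℝ) p 0 hLs (by linarith) hr0 hp
  set S : Set (Fin d → ℤ) := {i | znorm i ≤ max K M₀} with hSdef
  have hSfin : S.Finite := finite_znorm_le _
  set bound : (Fin d → ℤ) → ℝ :=
    fun i => -lam i + D₁ * mnorm i ^ (r:ℝ) + Ct * (1 + mnorm i ^ (r:ℝ)) with hbdef
  obtain ⟨l₀, hl₀⟩ := (hSfin.image bound).bddAbove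
  refine ⟨Ct, hCt, max 0 l₀, ?_⟩
  intro a ha hadiag
  have hrows : ∀ i : Fin d → ℤ,
      Summable (fun k : Fin d → ℤ => if k = i then 0 else |a i k|) ∧
      (∑' k : Fin d → ℤ, if k = i then 0 else |a i k|) ≤ Ct * (1 + mnorm i ^ (r:ℝ)) := by
    intro i
    apply hrow i
    · intro k
      by_cases hk : k = i <;> simp [hk, abs_nonneg]
    · simp
    · intro k hk
      simp only [if_neg hk]
      exact ha i k hk
  have hLb : ∀ i : Fin d → ℤ,
      a i i + (∑' k : Fin d → ℤ, if k = i then 0 else |a i k|) ≤ bound i := by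
    intro i
    have h1 := (hrows i).2
    have h2 := hadiag i
    simp only [hbdef]
    linarith
  have hbound_small : ∀ (b M : ℝ), 1 ≤ M →
      (∀ x : ℝ, M ≤ x → (D₁ + 2*Ct) * x ^ (r:ℝ) - Ls * x ^ p ≤ b) →
      ∀ i : Fin d → ℤ, max K M < znorm i → bound i ≤ b := by
    intro b M hM1 hM i hi
    have hzi : K < znorm i := lt_of_le_of_lt (le_max_left _ _) hi
    have hzM : M < znorm i := lt_of_le_of_lt (le_max_right _ _) hi
    have hi0 : i ≠ 0 := by
      intro h
      rw [h, znorm_zero] at hzM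
      linarith
    have hmn : mnorm i = znorm i := by unfold mnorm; rw [if_neg hi0]
    have hlam' := hlam i hzi
    have hcut := hM (znorm i) hzM.le
    have hx1 : (1:ℝ) ≤ znorm i := le_trans hM1 hzM.le
    have hxr1 : (1:ℝ) ≤ znorm i ^ (r:ℝ) := Real.one_le_rpow hx1 hr0
    simp only [hbdef, hmn]
    nlinarith [mul_le_mul_of_nonneg_left hxr1 hCt.le]
  refine ⟨hrows, ?_, ?_⟩
  · rw [tendsto_atBot]
    intro b
    obtain ⟨M, hM1, hM⟩ := exists_cutoff Ls (D₁ + 2*Ct) (r:ℝ) p b hLs (by linarith) hr0 hp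
    rw [eventually_cofinite]
    apply Set.Finite.subset (finite_znorm_le (max K M))
    intro i hi
    simp only [Set.mem_setOf_eq] at hi ⊢
    by_contra hcon
    push_neg at hcon
    exact hi (le_trans (hLb i) (hbound_small b M hM1 hM i hcon))
  · intro i
    by_cases hiS : i ∈ S
    · have hb : bound i ≤ l₀ := hl₀ (Set.mem_image_of_mem bound hiS)
      exact le_trans (hLb i) (le_trans hb (le_max_right _ _))
    · have hgt : max K M₀ < znorm i := by
        simp only [hSdef, Set.mem_setOf_eq, not_le] at hiS
        exact hiS
      exact le_trans (hLb i)
        (le_trans (hbound_small 0 M₀ hM₀1 hM₀ i hgt) (le_max_left _ _))
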